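/- Let a, b ∈ ℂ and let A be the free ℂ-vector space with basis {L_m : m ∈ ℤ} ∪ {W_m : m ∈ ℤ}. The ℂ-bilinear bracket on A defined on basis elements by [L_m,L_n] = (m−n)L_{m+n}, [L_m,W_n] = ((m+1)(a−1)−(n+1))W_{m+n} + bW_{m+n+1}, [W_n,L_m] = −[L_m,W_n], and [W_m,W_n] = 0 makes A into a Lie algebra, i.e., the bracket is alternating and satisfies the Jacobi identity. -/

import Mathlib

noncomputable section

/-- `A` is the free `ℂ`-vector space with basis `{L m : m ∈ ℤ} ∪ {W m : m ∈ ℤ}`. -/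
abbrev A : Type := (ℤ ⊕ ℤ) →₀ ℂ

/-- The basis vector `L m`. -/
def L (m : ℤ) : A := Finsupp.single (Sum.inl m) 1

/-- The basis vector `W m`. -/
def W (m : ℤ) : A := Finsupp.single (Sum.inr m) 1

theorem heL (m : ℤ) : (Finsupp.single (Sum.inl m) (1:ℂ) : A) = L m := rfl

theorem heW (m : ℤ) : (Finsupp.single (Sum.inr m) (1:ℂ) : A) = W m := rfl

theorem hsm (s : ℤ ⊕ ℤ) (c : ℂ) :
    (Finsupp.single s c : A) = c • Finsupp.single s 1 := by
  simp [Finsupp.smul_single]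

/-- the ℂ-bilinear bracket defined on basis elements by
`[L m, L n] = (m−n)L (m+n)`, `[L m, W n] = ((m+1)(a−1)−(n+1))W (m+n) + b W (m+n+1)`,
`[W n, L m] = −[L m, W n]`, `[W m, W n] = 0` makes `A` into a Lie algebra: it is
alternating and satisfies the Jacobi identity. -/
theorem stmt11 (a b : ℂ)
    (B : A →ₗ[ℂ] A →ₗ[ℂ] A)
    (hBLL : ∀ m n : ℤ, B (L m) (L n) = ((m : ℂ) - (n : ℂ)) • L (m + n))
    (hBLW : ∀ m n : ℤ, B (L m) (W n) =
      (((m : ℂ) + 1) * (a - 1) - ((n : ℂ) + 1)) • W (m + n) + b • W (m + n + 1))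
    (hBWL : ∀ m n : ℤ, B (W n) (L m) = -B (L m) (W n))
    (hBWW : ∀ m n : ℤ, B (W m) (W n) = 0) :
    -- the bracket is alternating:
    (∀ x : A, B x x = 0) ∧
    -- and satisfies the Jacobi identity:
    (∀ x y z : A, B x (B y z) = B (B x y) z + B y (B x z)) := by
  -- antisymmetry on basis vectors
  have key_anti : ∀ i j : ℤ ⊕ ℤ,
      B (Finsupp.single i 1) (Finsupp.single j 1)
        = - B (Finsupp.single j 1) (Finsupp.single i 1) := by
    intro i j
    obtain m | m := i <;> obtain n | n := j <;> simp only [heL, heW]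
    · rw [hBLL, hBLL, add_comm n m]; module
    · rw [hBWL, neg_neg]
    · rw [hBWL]
    · rw [hBWW, hBWW, neg_zero]
  -- antisymmetry in general
  have anti : ∀ x y : A, B x y = - B y x := by
    intro x
    induction x using Finsupp.induction_linear with
    | zero => intro y; simp
    | add f g hf hg =>
        intro y
        simp only [map_add, LinearMap.add_apply, hf y, hg y]; abel
    | single i c =>
        intro y
        induction y using Finsupp.induction_linear with
        | zero => simp
        | add f g hf hg =>
            simp only [map_add, LinearMap.add_apply, hf, hg]; abel
        | single j d =>
            rw [hsm i c, hsm j d]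
            simp only [map_smul, LinearMap.smul_apply]
            rw [key_anti i j]
            module
  -- Jacobi on basis vectors
  have keyJ : ∀ i j k : ℤ ⊕ ℤ,
      B (Finsupp.single i 1) (B (Finsupp.single j 1) (Finsupp.single k 1))
        = B (B (Finsupp.single i 1) (Finsupp.single j 1)) (Finsupp.single k 1)
          + B (Finsupp.single j 1) (B (Finsupp.single i 1) (Finsupp.single k 1)) := by
    intro i j k
    obtain m | m := i <;> obtain n | n := j <;> obtain p | p := k <;>
      simp only [heL, heW] <;>
      simp only [hBLL, hBLW, hBWL, hBWW, map_smul, map_add, map_neg, map_zero,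
        LinearMap.smul_apply, LinearMap.add_apply, LinearMap.neg_apply,
        LinearMap.zero_apply, smul_add, smul_neg, smul_zero, smul_smul,
        add_zero, zero_add, neg_zero, neg_add, neg_neg] <;>
      push_cast <;>
      ring_nf <;>
      try module
  -- Jacobi in general
  have jac : ∀ x y z : A, B x (B y z) = B (B x y) z + B y (B x z) := by
    intro x
    induction x using Finsupp.induction_linear with
    | zero => intro y z; simp
    | add f g hf hg =>
        intro y z
        simp only [map_add, LinearMap.add_apply, hf y z, hg y z]; abel
    | single i c =>
        intro y
        induction y using Finsupp.induction_linear with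
        | zero => intro z; simp
        | add f g hf hg =>
            intro z
            simp only [map_add, LinearMap.add_apply, hf z, hg z]; abel
        | single j d =>
            intro z
            induction z using Finsupp.induction_linear with
            | zero => simp
            | add f g hf hg =>
                simp only [map_add, hf, hg]; abel
            | single k e =>
                rw [hsm i c, hsm j d, hsm k e]
                simp only [map_smul, LinearMap.smul_apply, smul_add]
                rw [keyJ i j k]
                simp only [smul_add, smul_smul]
                module
  refine ⟨?_, jac⟩
  intro x
  have h := anti x x
  have h2 : (2 : ℂ) • B x x = 0 := by
    rw [two_smul]; nth_rewrite 1 [h]; exact neg_add_cancel _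
  simpa using h2

end
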